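/- Let ψ₁(x) = (sech(αx))^{√2A/α} and ψ₂(x) = sinh(αx)·ψ₁(x), and let W₂ = ψ₁ψ₂' − ψ₂ψ₁' be their Wronskian. Then the second Crum transform u^C[2] = u − 2·(d²/dx²) ln W₂ of the potential u(x;A) = 2[A² − A(A + α/√2)sech²(αx)] equals 2[A² − A₁A₂·sech²(αx)], where Aₙ = A − nα/√2. -/

import Mathlib

/-- The second Crum transform of the Morse-type potential:
with `ψ₁ = (sech(αx))^{√2A/α}`, `ψ₂ = sinh(αx)·ψ₁` and
`W₂ = ψ₁ψ₂' − ψ₂ψ₁'`, one has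
`u − 2(ln W₂)'' = 2[A² − A₁A₂ sech²(αx)]` where `Aₙ = A − nα/√2`. -/
theorem morse_crum2 (α A : ℝ) (hα : 0 < α) (hA : α / Real.sqrt 2 < A)
    (u ψ₁ ψ₂ W₂ uC2 : ℝ → ℝ)
    (hu : u = fun x => 2 * (A ^ 2 - A * (A + α / Real.sqrt 2) * (1 / Real.cosh (α * x)) ^ 2))
    (hψ₁ : ψ₁ = fun x => (1 / Real.cosh (α * x)) ^ (Real.sqrt 2 * A / α))
    (hψ₂ : ψ₂ = fun x => Real.sinh (α * x) * ψ₁ x)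
    (hW₂ : W₂ = fun x => ψ₁ x * deriv ψ₂ x - ψ₂ x * deriv ψ₁ x)
    (huC2 : uC2 = fun x => u x - 2 * deriv (deriv (fun y => Real.log (W₂ y))) x) :
    uC2 = fun x =>
      2 * (A ^ 2 - (A - α / Real.sqrt 2) * (A - 2 * α / Real.sqrt 2) *
        (1 / Real.cosh (α * x)) ^ 2) := by
  have h2 : (0:ℝ) < Real.sqrt 2 := by positivity
  set k := Real.sqrt 2 * A / α with hk
  have hcpos : ∀ x : ℝ, 0 < Real.cosh (α * x) := fun x => Real.cosh_pos _
  have hcne : ∀ x : ℝ, Real.cosh (α * x) ≠ 0 := fun x => (hcpos x).ne'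
  have hψ₁' : ∀ x, ψ₁ x = Real.cosh (α * x) ^ (-k) := by
    intro x
    rw [hψ₁]
    show (1 / Real.cosh (α*x)) ^ k = _
    rw [one_div, ← Real.rpow_neg_one (Real.cosh (α*x)), ← Real.rpow_mul (hcpos x).le]
    ring_nf
  have hcosh : ∀ x : ℝ, HasDerivAt (fun y => Real.cosh (α * y)) (α * Real.sinh (α * x)) x := by
    intro x
    have h := (Real.hasDerivAt_cosh (α * x)).comp x ((hasDerivAt_id x).const_mul α)
    simpa [mul_comm, Function.comp_def] using h
  have hd1 : ∀ x, HasDerivAt ψ₁ (-k * Real.cosh (α*x) ^ (-k-1) * (α * Real.sinh (α*x))) x := by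
    intro x
    have h := ((hcosh x).rpow_const (p := -k) (Or.inl (hcne x)))
    have hfun : ψ₁ = fun y => Real.cosh (α * y) ^ (-k) := funext hψ₁'
    rw [hfun]
    convert h using 1
    ring
  have hd2 : ∀ x, HasDerivAt ψ₂
      (α * Real.cosh (α*x) * ψ₁ x + Real.sinh (α*x) * (-k * Real.cosh (α*x) ^ (-k-1) * (α * Real.sinh (α*x)))) x := by
    intro x
    have hsinh : HasDerivAt (fun y => Real.sinh (α * y)) (α * Real.cosh (α * x)) x := by
      have h := (Real.hasDerivAt_sinh (α * x)).comp x ((hasDerivAt_id x).const_mul α)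
      simpa [mul_comm, Function.comp_def] using h
    have h := hsinh.mul (hd1 x)
    rw [hψ₂]
    exact h
  have hW : ∀ x, W₂ x = α * Real.cosh (α*x) ^ (1 - 2*k) := by
    intro x
    rw [hW₂]
    show ψ₁ x * deriv ψ₂ x - ψ₂ x * deriv ψ₁ x = _
    rw [(hd2 x).deriv, (hd1 x).deriv, hψ₂]
    show ψ₁ x * _ - Real.sinh (α*x) * ψ₁ x * _ = _
    have e1 : ψ₁ x * (α * Real.cosh (α*x) * ψ₁ x + Real.sinh (α*x) * (-k * Real.cosh (α*x) ^ (-k-1) * (α * Real.sinh (α*x))))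
        - Real.sinh (α*x) * ψ₁ x * (-k * Real.cosh (α*x) ^ (-k-1) * (α * Real.sinh (α*x)))
        = α * Real.cosh (α*x) * (ψ₁ x * ψ₁ x) := by ring
    rw [e1, hψ₁' x, show (1:ℝ) - 2*k = 1 + (-k + -k) by ring,
        Real.rpow_add (hcpos x), Real.rpow_add (hcpos x), Real.rpow_one]
    ring
  -- log W₂ closed form
  have hWpos : ∀ x, 0 < W₂ x := by
    intro x; rw [hW x]; positivity
  have hlog : (fun y => Real.log (W₂ y)) =
      fun y => Real.log α + (1 - 2*k) * Real.log (Real.cosh (α * y)) := by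
    funext y
    rw [hW y, Real.log_mul hα.ne' (Real.rpow_pos_of_pos (hcpos y) _).ne', Real.log_rpow (hcpos y)]
  -- first derivative of log W₂
  have hdl1 : ∀ x, HasDerivAt (fun y => Real.log (W₂ y))
      ((1 - 2*k) * (α * Real.sinh (α*x) / Real.cosh (α*x))) x := by
    intro x
    rw [hlog]
    have h := (((hcosh x).log (hcne x)).const_mul (1 - 2*k)).const_add (Real.log α)
    exact h
  have hdl1' : deriv (fun y => Real.log (W₂ y)) =
      fun x => (1 - 2*k) * (α * Real.sinh (α*x) / Real.cosh (α*x)) := funext fun x => (hdl1 x).deriv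
  -- second derivative
  have hdl2 : ∀ x, deriv (deriv (fun y => Real.log (W₂ y))) x
      = (1 - 2*k) * α^2 * (1 / Real.cosh (α*x))^2 := by
    intro x
    rw [hdl1']
    have hsinh : HasDerivAt (fun y => α * Real.sinh (α * y)) (α * (α * Real.cosh (α * x))) x := by
      have h := (Real.hasDerivAt_sinh (α * x)).comp x ((hasDerivAt_id x).const_mul α)
      exact (by simpa [mul_comm, Function.comp_def] using h : HasDerivAt (fun y => Real.sinh (α * y)) (α * Real.cosh (α * x)) x).const_mul α
    have hq := (hsinh.div (hcosh x) (hcne x)).const_mul (1 - 2*k)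
    rw [show deriv (fun x => (1 - 2*k) * (α * Real.sinh (α*x) / Real.cosh (α*x))) x = _ from hq.deriv]
    have hc2 : Real.cosh (α*x)^2 - Real.sinh (α*x)^2 = 1 := Real.cosh_sq_sub_sinh_sq _
    have hnum : α * (α * Real.cosh (α*x)) * Real.cosh (α*x) - α * Real.sinh (α*x) * (α * Real.sinh (α*x))
        = α^2 := by linear_combination α^2 * hc2
    rw [hnum]
    field_simp
  -- final computation
  rw [huC2, hu]
  funext x
  have hs2 : Real.sqrt 2 ^ 2 = 2 := Real.sq_sqrt (by norm_num)
  rw [hdl2 x, hk]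
  have hdiv : α / Real.sqrt 2 = α * Real.sqrt 2 / 2 := by
    rw [div_eq_div_iff h2.ne' (by norm_num : (2:ℝ) ≠ 0)]
    linear_combination (-α) * hs2
  have he : (1 - 2*(Real.sqrt 2 * A / α))*α^2 = α^2 - 2*Real.sqrt 2*A*α := by
    field_simp
  have hinv : (Real.sqrt 2)⁻¹ = Real.sqrt 2 / 2 := by
    rw [inv_eq_one_div, div_eq_div_iff h2.ne' (by norm_num : (2:ℝ) ≠ 0)]
    linear_combination -hs2
  rw [hdiv, he]
  linear_combination (-4*A*α*(1/Real.cosh (α*x))^2 + 2*α^2*(1/Real.cosh (α*x))^2*Real.sqrt 2) * hinv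
    + (α^2*(1/Real.cosh (α*x))^2) * hs2
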